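/- Let T = (c₁,0,c₃,c₄,0,0,f₁,f₂,f₃,f₄,t₁,t₂) and T′ = (c₁,0,c₃,c₄,0,0,f₁′,f₂′,f₃′,f₄′,t₁′,t₂′) be tuples in ℤ¹² with the same values c₁, c₃, c₄, all nonzero, and with gcd(c₁,c₃) = 1 and gcd(c₃,c₄) = 1. Then T and T′ are ψ-equivalent if and only if: f₁ ≡ f₁′ (mod c₁); f₂ ≡ f₂′ (mod c₄); c₃t₂ + f₃f₄ ≡ c₃t₂′ + f₃′f₄′ (mod gcd(c₁,c₄,c₃f₁,c₃f₂)); and c₁c₄t₁ + c₄f₁f₄ + c₁f₂f₃ ≡ c₁c₄t₁′ + c₄f₁′f₄′ + c₁f₂′f₃′ (mod c₃). -/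

import Mathlib

/-- A 12-tuple of integers, with coordinates written `(c₁,…,c₆,f₁,…,f₄,t₁,t₂)`. -/
structure Tuple : Type where
  c1 : ℤ
  c2 : ℤ
  c3 : ℤ
  c4 : ℤ
  c5 : ℤ
  c6 : ℤ
  f1 : ℤ
  f2 : ℤ
  f3 : ℤ
  f4 : ℤ
  t1 : ℤ
  t2 : ℤ

/-- The move ψ₂₁ : f₃↦f₃+c₅, f₄↦f₄−c₁, t₁↦t₁+f₁. -/
def psi21 : Equiv.Perm Tuple where
  toFun x := { x with f3 := x.f3 + x.c5, f4 := x.f4 - x.c1, t1 := x.t1 + x.f1 }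
  invFun x := { x with f3 := x.f3 - x.c5, f4 := x.f4 + x.c1, t1 := x.t1 - x.f1 }
  left_inv x := by cases x; simp
  right_inv x := by cases x; simp

/-- The move ψ₄₁ : f₂↦f₂+c₆, f₃↦f₃−c₅, t₂↦t₂−f₁. -/
def psi41 : Equiv.Perm Tuple where
  toFun x := { x with f2 := x.f2 + x.c6, f3 := x.f3 - x.c5, t2 := x.t2 - x.f1 }
  invFun x := { x with f2 := x.f2 - x.c6, f3 := x.f3 + x.c5, t2 := x.t2 + x.f1 }
  left_inv x := by cases x; simp
  right_inv x := by cases x; simp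

/-- The move ψ₁₂ : f₃↦f₃−c₄, f₄↦f₄+c₂, t₁↦t₁+f₂. -/
def psi12 : Equiv.Perm Tuple where
  toFun x := { x with f3 := x.f3 - x.c4, f4 := x.f4 + x.c2, t1 := x.t1 + x.f2 }
  invFun x := { x with f3 := x.f3 + x.c4, f4 := x.f4 - x.c2, t1 := x.t1 - x.f2 }
  left_inv x := by cases x; simp
  right_inv x := by cases x; simp

/-- The move ψ₃₂ : f₁↦f₁+c₆, f₄↦f₄−c₂, t₂↦t₂−f₂. -/
def psi32 : Equiv.Perm Tuple where
  toFun x := { x with f1 := x.f1 + x.c6, f4 := x.f4 - x.c2, t2 := x.t2 - x.f2 }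
  invFun x := { x with f1 := x.f1 - x.c6, f4 := x.f4 + x.c2, t2 := x.t2 + x.f2 }
  left_inv x := by cases x; simp
  right_inv x := by cases x; simp

/-- The move ψ₄₃ : f₁↦f₁+c₅, f₂↦f₂−c₄, t₁↦t₁+f₃. -/
def psi43 : Equiv.Perm Tuple where
  toFun x := { x with f1 := x.f1 + x.c5, f2 := x.f2 - x.c4, t1 := x.t1 + x.f3 }
  invFun x := { x with f1 := x.f1 - x.c5, f2 := x.f2 + x.c4, t1 := x.t1 - x.f3 }
  left_inv x := by cases x; simp
  right_inv x := by cases x; simp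

/-- The move ψ₂₃ : f₁↦f₁−c₅, f₄↦f₄+c₃, t₂↦t₂−f₃. -/
def psi23 : Equiv.Perm Tuple where
  toFun x := { x with f1 := x.f1 - x.c5, f4 := x.f4 + x.c3, t2 := x.t2 - x.f3 }
  invFun x := { x with f1 := x.f1 + x.c5, f4 := x.f4 - x.c3, t2 := x.t2 + x.f3 }
  left_inv x := by cases x; simp
  right_inv x := by cases x; simp

/-- The move ψ₃₄ : f₁↦f₁−c₁, f₂↦f₂+c₂, t₁↦t₁+f₄. -/
def psi34 : Equiv.Perm Tuple where
  toFun x := { x with f1 := x.f1 - x.c1, f2 := x.f2 + x.c2, t1 := x.t1 + x.f4 }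
  invFun x := { x with f1 := x.f1 + x.c1, f2 := x.f2 - x.c2, t1 := x.t1 - x.f4 }
  left_inv x := by cases x; simp
  right_inv x := by cases x; simp

/-- The move ψ₁₄ : f₂↦f₂−c₂, f₃↦f₃+c₃, t₂↦t₂−f₄. -/
def psi14 : Equiv.Perm Tuple where
  toFun x := { x with f2 := x.f2 - x.c2, f3 := x.f3 + x.c3, t2 := x.t2 - x.f4 }
  invFun x := { x with f2 := x.f2 + x.c2, f3 := x.f3 - x.c3, t2 := x.t2 + x.f4 }
  left_inv x := by cases x; simp
  right_inv x := by cases x; simp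

/-- The list of the eight ψ-moves. -/
def psiMoves : List (Equiv.Perm Tuple) :=
  [psi21, psi41, psi12, psi32, psi43, psi23, psi34, psi14]

/-- Two tuples are ψ-equivalent if one is obtained from the other by a finite
composition of the eight ψ-moves and their inverses, i.e. they are related by the
equivalence relation generated by single applications of the moves. -/
def PsiEquiv : Tuple → Tuple → Prop :=
  Relation.EqvGen (fun x y => ∃ g ∈ psiMoves, g x = y)

lemma Tuple.ext' (x y : Tuple) (h1 : x.c1 = y.c1) (h2 : x.c2 = y.c2) (h3 : x.c3 = y.c3)
    (h4 : x.c4 = y.c4) (h5 : x.c5 = y.c5) (h6 : x.c6 = y.c6) (h7 : x.f1 = y.f1)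
    (h8 : x.f2 = y.f2) (h9 : x.f3 = y.f3) (h10 : x.f4 = y.f4) (h11 : x.t1 = y.t1)
    (h12 : x.t2 = y.t2) : x = y := by cases x; cases y; simp_all

lemma tupext {c1 c3 c4 a1 a2 a3 a4 a5 a6 b1 b2 b3 b4 b5 b6 : ℤ}
    (h1 : a1 = b1) (h2 : a2 = b2) (h3 : a3 = b3) (h4 : a4 = b4) (h5 : a5 = b5) (h6 : a6 = b6) :
    (⟨c1,0,c3,c4,0,0,a1,a2,a3,a4,a5,a6⟩ : Tuple) = ⟨c1,0,c3,c4,0,0,b1,b2,b3,b4,b5,b6⟩ := by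
  simp_all

lemma PsiEquiv.of_eq {x y : Tuple} (h : x = y) : PsiEquiv x y := h ▸ Relation.EqvGen.refl x

lemma PsiEquiv.trans' {x y z : Tuple} (h1 : PsiEquiv x y) (h2 : PsiEquiv y z) : PsiEquiv x z :=
  Relation.EqvGen.trans _ _ _ h1 h2

lemma stepA (c1 c3 c4 f1 f2 f3 f4 t1 t2 : ℤ) (n : ℤ) :
    PsiEquiv ⟨c1,0,c3,c4,0,0,f1,f2,f3,f4,t1,t2⟩
      ⟨c1,0,c3,c4,0,0,f1,f2,f3,f4 - n*c1,t1 + n*f1,t2⟩ := by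
  induction n using Int.induction_on with
  | zero => exact PsiEquiv.of_eq (tupext (by ring) (by ring) (by ring) (by ring) (by ring) (by ring))
  | succ k ih =>
      refine Relation.EqvGen.trans _ _ _ ih (Relation.EqvGen.rel _ _ ⟨psi21, by simp [psiMoves], ?_⟩)
      refine Tuple.ext' _ _ ?_ ?_ ?_ ?_ ?_ ?_ ?_ ?_ ?_ ?_ ?_ ?_ <;> simp [psi21] <;> ring
  | pred k ih =>
      refine Relation.EqvGen.trans _ _ _ ih ?_
      refine Relation.EqvGen.symm _ _ (Relation.EqvGen.rel _ _ ⟨psi21, by simp [psiMoves], ?_⟩)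
      refine Tuple.ext' _ _ ?_ ?_ ?_ ?_ ?_ ?_ ?_ ?_ ?_ ?_ ?_ ?_ <;> simp [psi21] <;> ring

lemma stepB (c1 c3 c4 f1 f2 f3 f4 t1 t2 : ℤ) (n : ℤ) :
    PsiEquiv ⟨c1,0,c3,c4,0,0,f1,f2,f3,f4,t1,t2⟩
      ⟨c1,0,c3,c4,0,0,f1,f2,f3,f4,t1,t2 - n*f1⟩ := by
  induction n using Int.induction_on with
  | zero => exact PsiEquiv.of_eq (tupext (by ring) (by ring) (by ring) (by ring) (by ring) (by ring))
  | succ k ih =>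
      refine Relation.EqvGen.trans _ _ _ ih (Relation.EqvGen.rel _ _ ⟨psi41, by simp [psiMoves], ?_⟩)
      refine Tuple.ext' _ _ ?_ ?_ ?_ ?_ ?_ ?_ ?_ ?_ ?_ ?_ ?_ ?_ <;> simp [psi41] <;> ring
  | pred k ih =>
      refine Relation.EqvGen.trans _ _ _ ih ?_
      refine Relation.EqvGen.symm _ _ (Relation.EqvGen.rel _ _ ⟨psi41, by simp [psiMoves], ?_⟩)
      refine Tuple.ext' _ _ ?_ ?_ ?_ ?_ ?_ ?_ ?_ ?_ ?_ ?_ ?_ ?_ <;> simp [psi41] <;> ring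

lemma stepC (c1 c3 c4 f1 f2 f3 f4 t1 t2 : ℤ) (n : ℤ) :
    PsiEquiv ⟨c1,0,c3,c4,0,0,f1,f2,f3,f4,t1,t2⟩
      ⟨c1,0,c3,c4,0,0,f1,f2,f3 - n*c4,f4,t1 + n*f2,t2⟩ := by
  induction n using Int.induction_on with
  | zero => exact PsiEquiv.of_eq (tupext (by ring) (by ring) (by ring) (by ring) (by ring) (by ring))
  | succ k ih =>
      refine Relation.EqvGen.trans _ _ _ ih (Relation.EqvGen.rel _ _ ⟨psi12, by simp [psiMoves], ?_⟩)
      refine Tuple.ext' _ _ ?_ ?_ ?_ ?_ ?_ ?_ ?_ ?_ ?_ ?_ ?_ ?_ <;> simp [psi12] <;> ring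
  | pred k ih =>
      refine Relation.EqvGen.trans _ _ _ ih ?_
      refine Relation.EqvGen.symm _ _ (Relation.EqvGen.rel _ _ ⟨psi12, by simp [psiMoves], ?_⟩)
      refine Tuple.ext' _ _ ?_ ?_ ?_ ?_ ?_ ?_ ?_ ?_ ?_ ?_ ?_ ?_ <;> simp [psi12] <;> ring

lemma stepD (c1 c3 c4 f1 f2 f3 f4 t1 t2 : ℤ) (n : ℤ) :
    PsiEquiv ⟨c1,0,c3,c4,0,0,f1,f2,f3,f4,t1,t2⟩
      ⟨c1,0,c3,c4,0,0,f1,f2,f3,f4,t1,t2 - n*f2⟩ := by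
  induction n using Int.induction_on with
  | zero => exact PsiEquiv.of_eq (tupext (by ring) (by ring) (by ring) (by ring) (by ring) (by ring))
  | succ k ih =>
      refine Relation.EqvGen.trans _ _ _ ih (Relation.EqvGen.rel _ _ ⟨psi32, by simp [psiMoves], ?_⟩)
      refine Tuple.ext' _ _ ?_ ?_ ?_ ?_ ?_ ?_ ?_ ?_ ?_ ?_ ?_ ?_ <;> simp [psi32] <;> ring
  | pred k ih =>
      refine Relation.EqvGen.trans _ _ _ ih ?_
      refine Relation.EqvGen.symm _ _ (Relation.EqvGen.rel _ _ ⟨psi32, by simp [psiMoves], ?_⟩)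
      refine Tuple.ext' _ _ ?_ ?_ ?_ ?_ ?_ ?_ ?_ ?_ ?_ ?_ ?_ ?_ <;> simp [psi32] <;> ring

lemma stepE (c1 c3 c4 f1 f2 f3 f4 t1 t2 : ℤ) (n : ℤ) :
    PsiEquiv ⟨c1,0,c3,c4,0,0,f1,f2,f3,f4,t1,t2⟩
      ⟨c1,0,c3,c4,0,0,f1,f2 - n*c4,f3,f4,t1 + n*f3,t2⟩ := by
  induction n using Int.induction_on with
  | zero => exact PsiEquiv.of_eq (tupext (by ring) (by ring) (by ring) (by ring) (by ring) (by ring))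
  | succ k ih =>
      refine Relation.EqvGen.trans _ _ _ ih (Relation.EqvGen.rel _ _ ⟨psi43, by simp [psiMoves], ?_⟩)
      refine Tuple.ext' _ _ ?_ ?_ ?_ ?_ ?_ ?_ ?_ ?_ ?_ ?_ ?_ ?_ <;> simp [psi43] <;> ring
  | pred k ih =>
      refine Relation.EqvGen.trans _ _ _ ih ?_
      refine Relation.EqvGen.symm _ _ (Relation.EqvGen.rel _ _ ⟨psi43, by simp [psiMoves], ?_⟩)
      refine Tuple.ext' _ _ ?_ ?_ ?_ ?_ ?_ ?_ ?_ ?_ ?_ ?_ ?_ ?_ <;> simp [psi43] <;> ring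

lemma stepF (c1 c3 c4 f1 f2 f3 f4 t1 t2 : ℤ) (n : ℤ) :
    PsiEquiv ⟨c1,0,c3,c4,0,0,f1,f2,f3,f4,t1,t2⟩
      ⟨c1,0,c3,c4,0,0,f1,f2,f3,f4 + n*c3,t1,t2 - n*f3⟩ := by
  induction n using Int.induction_on with
  | zero => exact PsiEquiv.of_eq (tupext (by ring) (by ring) (by ring) (by ring) (by ring) (by ring))
  | succ k ih =>
      refine Relation.EqvGen.trans _ _ _ ih (Relation.EqvGen.rel _ _ ⟨psi23, by simp [psiMoves], ?_⟩)
      refine Tuple.ext' _ _ ?_ ?_ ?_ ?_ ?_ ?_ ?_ ?_ ?_ ?_ ?_ ?_ <;> simp [psi23] <;> ring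
  | pred k ih =>
      refine Relation.EqvGen.trans _ _ _ ih ?_
      refine Relation.EqvGen.symm _ _ (Relation.EqvGen.rel _ _ ⟨psi23, by simp [psiMoves], ?_⟩)
      refine Tuple.ext' _ _ ?_ ?_ ?_ ?_ ?_ ?_ ?_ ?_ ?_ ?_ ?_ ?_ <;> simp [psi23] <;> ring

lemma stepG (c1 c3 c4 f1 f2 f3 f4 t1 t2 : ℤ) (n : ℤ) :
    PsiEquiv ⟨c1,0,c3,c4,0,0,f1,f2,f3,f4,t1,t2⟩
      ⟨c1,0,c3,c4,0,0,f1 - n*c1,f2,f3,f4,t1 + n*f4,t2⟩ := by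
  induction n using Int.induction_on with
  | zero => exact PsiEquiv.of_eq (tupext (by ring) (by ring) (by ring) (by ring) (by ring) (by ring))
  | succ k ih =>
      refine Relation.EqvGen.trans _ _ _ ih (Relation.EqvGen.rel _ _ ⟨psi34, by simp [psiMoves], ?_⟩)
      refine Tuple.ext' _ _ ?_ ?_ ?_ ?_ ?_ ?_ ?_ ?_ ?_ ?_ ?_ ?_ <;> simp [psi34] <;> ring
  | pred k ih =>
      refine Relation.EqvGen.trans _ _ _ ih ?_
      refine Relation.EqvGen.symm _ _ (Relation.EqvGen.rel _ _ ⟨psi34, by simp [psiMoves], ?_⟩)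
      refine Tuple.ext' _ _ ?_ ?_ ?_ ?_ ?_ ?_ ?_ ?_ ?_ ?_ ?_ ?_ <;> simp [psi34] <;> ring

lemma stepH (c1 c3 c4 f1 f2 f3 f4 t1 t2 : ℤ) (n : ℤ) :
    PsiEquiv ⟨c1,0,c3,c4,0,0,f1,f2,f3,f4,t1,t2⟩
      ⟨c1,0,c3,c4,0,0,f1,f2,f3 + n*c3,f4,t1,t2 - n*f4⟩ := by
  induction n using Int.induction_on with
  | zero => exact PsiEquiv.of_eq (tupext (by ring) (by ring) (by ring) (by ring) (by ring) (by ring))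
  | succ k ih =>
      refine Relation.EqvGen.trans _ _ _ ih (Relation.EqvGen.rel _ _ ⟨psi14, by simp [psiMoves], ?_⟩)
      refine Tuple.ext' _ _ ?_ ?_ ?_ ?_ ?_ ?_ ?_ ?_ ?_ ?_ ?_ ?_ <;> simp [psi14] <;> ring
  | pred k ih =>
      refine Relation.EqvGen.trans _ _ _ ih ?_
      refine Relation.EqvGen.symm _ _ (Relation.EqvGen.rel _ _ ⟨psi14, by simp [psiMoves], ?_⟩)
      refine Tuple.ext' _ _ ?_ ?_ ?_ ?_ ?_ ?_ ?_ ?_ ?_ ?_ ?_ ?_ <;> simp [psi14] <;> ring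

lemma shiftT1 (c1 c3 c4 f1 f2 f3 f4 t1 t2 : ℤ) (n : ℤ) :
    PsiEquiv ⟨c1,0,c3,c4,0,0,f1,f2,f3,f4,t1,t2⟩
      ⟨c1,0,c3,c4,0,0,f1,f2,f3,f4,t1 + n*c3,t2⟩ := by
  refine PsiEquiv.trans' (stepE c1 c3 c4 f1 f2 f3 f4 t1 t2 (-n)) ?_
  refine PsiEquiv.trans' (stepH c1 c3 c4 _ _ _ _ _ _ 1) ?_
  refine PsiEquiv.trans' (stepE c1 c3 c4 _ _ _ _ _ _ n) ?_
  refine PsiEquiv.trans' (stepH c1 c3 c4 _ _ _ _ _ _ (-1)) ?_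
  exact PsiEquiv.of_eq (tupext (by ring) (by ring) (by ring) (by ring) (by ring) (by ring))

lemma shiftT2c1 (c1 c3 c4 f1 f2 f3 f4 t1 t2 : ℤ) (n : ℤ) :
    PsiEquiv ⟨c1,0,c3,c4,0,0,f1,f2,f3,f4,t1,t2⟩
      ⟨c1,0,c3,c4,0,0,f1,f2,f3,f4,t1,t2 + n*c1⟩ := by
  refine PsiEquiv.trans' (stepG c1 c3 c4 f1 f2 f3 f4 t1 t2 n) ?_
  refine PsiEquiv.trans' (stepB c1 c3 c4 _ _ _ _ _ _ 1) ?_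
  refine PsiEquiv.trans' (stepG c1 c3 c4 _ _ _ _ _ _ (-n)) ?_
  refine PsiEquiv.trans' (stepB c1 c3 c4 _ _ _ _ _ _ (-1)) ?_
  exact PsiEquiv.of_eq (tupext (by ring) (by ring) (by ring) (by ring) (by ring) (by ring))

lemma shiftT2c4 (c1 c3 c4 f1 f2 f3 f4 t1 t2 : ℤ) (n : ℤ) :
    PsiEquiv ⟨c1,0,c3,c4,0,0,f1,f2,f3,f4,t1,t2⟩
      ⟨c1,0,c3,c4,0,0,f1,f2,f3,f4,t1,t2 + n*c4⟩ := by
  refine PsiEquiv.trans' (stepE c1 c3 c4 f1 f2 f3 f4 t1 t2 n) ?_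
  refine PsiEquiv.trans' (stepD c1 c3 c4 _ _ _ _ _ _ 1) ?_
  refine PsiEquiv.trans' (stepE c1 c3 c4 _ _ _ _ _ _ (-n)) ?_
  refine PsiEquiv.trans' (stepD c1 c3 c4 _ _ _ _ _ _ (-1)) ?_
  exact PsiEquiv.of_eq (tupext (by ring) (by ring) (by ring) (by ring) (by ring) (by ring))

/-- Invariant relation preserved by all ψ-moves. -/
def PsiInv (x y : Tuple) : Prop :=
  x.c1 = y.c1 ∧ x.c2 = y.c2 ∧ x.c3 = y.c3 ∧ x.c4 = y.c4 ∧ x.c5 = y.c5 ∧ x.c6 = y.c6 ∧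
  (x.c2 = 0 → x.c5 = 0 → x.c6 = 0 →
    (x.c1 ∣ x.f1 - y.f1) ∧
    (x.c4 ∣ x.f2 - y.f2) ∧
    (∀ e : ℤ, e ∣ x.c1 → e ∣ x.c4 → e ∣ x.f1 → e ∣ x.f2 →
      e ∣ (x.c3 * x.t2 + x.f3 * x.f4) - (x.c3 * y.t2 + y.f3 * y.f4)) ∧
    (x.c3 ∣ (x.c1 * x.c4 * x.t1 + x.c4 * x.f1 * x.f4 + x.c1 * x.f2 * x.f3) -
      (x.c1 * x.c4 * y.t1 + x.c4 * y.f1 * y.f4 + x.c1 * y.f2 * y.f3)))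

lemma inv_refl (x : Tuple) : PsiInv x x :=
  ⟨rfl, rfl, rfl, rfl, rfl, rfl, fun _ _ _ =>
    ⟨by simp, by simp, fun e _ _ _ _ => by simp, by simp⟩⟩

lemma inv_symm {x y : Tuple} (h : PsiInv x y) : PsiInv y x := by
  obtain ⟨c1,c2,c3,c4,c5,c6,f1,f2,f3,f4,t1,t2⟩ := x
  obtain ⟨d1,d2,d3,d4,d5,d6,g1,g2,g3,g4,u1,u2⟩ := y
  obtain ⟨h1,h2,h3,h4,h5,h6,himp⟩ := h
  simp only at h1 h2 h3 h4 h5 h6 himp ⊢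
  subst h1; subst h2; subst h3; subst h4; subst h5; subst h6
  refine ⟨rfl, rfl, rfl, rfl, rfl, rfl, fun g2z g5z g6z => ?_⟩
  obtain ⟨k1, k2, k3, k4⟩ := himp g2z g5z g6z
  refine ⟨by obtain ⟨w, hw⟩ := k1; exact ⟨-w, by linarith⟩,
          by obtain ⟨w, hw⟩ := k2; exact ⟨-w, by linarith⟩, ?_,
          by obtain ⟨w, hw⟩ := k4; exact ⟨-w, by linarith⟩⟩
  intro e he1 he4 heg1 heg2
  have hef1 : e ∣ f1 := by
    have h' : e ∣ f1 - g1 := dvd_trans he1 k1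
    simpa using dvd_add h' heg1
  have hef2 : e ∣ f2 := by
    have h' : e ∣ f2 - g2 := dvd_trans he4 k2
    simpa using dvd_add h' heg2
  obtain ⟨w, hw⟩ := k3 e he1 he4 hef1 hef2
  exact ⟨-w, by linarith⟩

lemma inv_trans {x y z : Tuple} (hxy : PsiInv x y) (hyz : PsiInv y z) : PsiInv x z := by
  obtain ⟨c1,c2,c3,c4,c5,c6,f1,f2,f3,f4,t1,t2⟩ := x
  obtain ⟨d1,d2,d3,d4,d5,d6,g1,g2,g3,g4,u1,u2⟩ := y
  obtain ⟨e1,e2,e3,e4,e5,e6,m1,m2,m3,m4,v1,v2⟩ := z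
  obtain ⟨h1,h2,h3,h4,h5,h6,himp⟩ := hxy
  obtain ⟨h1',h2',h3',h4',h5',h6',himp'⟩ := hyz
  simp only at h1 h2 h3 h4 h5 h6 himp h1' h2' h3' h4' h5' h6' himp' ⊢
  subst h1; subst h2; subst h3; subst h4; subst h5; subst h6
  subst h1'; subst h2'; subst h3'; subst h4'; subst h5'; subst h6'
  refine ⟨rfl, rfl, rfl, rfl, rfl, rfl, fun g2z g5z g6z => ?_⟩
  obtain ⟨k1, k2, k3, k4⟩ := himp g2z g5z g6z
  obtain ⟨k1', k2', k3', k4'⟩ := himp' g2z g5z g6z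
  refine ⟨by simpa using dvd_add k1 k1', by simpa using dvd_add k2 k2', ?_,
          by simpa using dvd_add k4 k4'⟩
  intro e he1 he4 hef1 hef2
  have heg1 : e ∣ g1 := by
    have h' : e ∣ f1 - g1 := dvd_trans he1 k1
    simpa using dvd_sub hef1 h'
  have heg2 : e ∣ g2 := by
    have h' : e ∣ f2 - g2 := dvd_trans he4 k2
    simpa using dvd_sub hef2 h'
  simpa using dvd_add (k3 e he1 he4 hef1 hef2) (k3' e he1 he4 heg1 heg2)

lemma inv_psi21 (x : Tuple) : PsiInv x (psi21 x) := by
  obtain ⟨c1,c2,c3,c4,c5,c6,f1,f2,f3,f4,t1,t2⟩ := x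
  refine ⟨rfl, rfl, rfl, rfl, rfl, rfl, ?_⟩
  rintro rfl rfl rfl
  simp only [psi21, Equiv.coe_fn_mk]
  refine ⟨⟨0, by ring⟩, ⟨0, by ring⟩, ?_, ⟨0, by ring⟩⟩
  rintro e ⟨w, rfl⟩ _ _ _
  exact ⟨w * f3, by ring⟩

lemma inv_psi41 (x : Tuple) : PsiInv x (psi41 x) := by
  obtain ⟨c1,c2,c3,c4,c5,c6,f1,f2,f3,f4,t1,t2⟩ := x
  refine ⟨rfl, rfl, rfl, rfl, rfl, rfl, ?_⟩
  rintro rfl rfl rfl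
  simp only [psi41, Equiv.coe_fn_mk]
  refine ⟨⟨0, by ring⟩, ⟨0, by ring⟩, ?_, ⟨0, by ring⟩⟩
  rintro e _ _ ⟨w, rfl⟩ _
  exact ⟨c3 * w, by ring⟩

lemma inv_psi12 (x : Tuple) : PsiInv x (psi12 x) := by
  obtain ⟨c1,c2,c3,c4,c5,c6,f1,f2,f3,f4,t1,t2⟩ := x
  refine ⟨rfl, rfl, rfl, rfl, rfl, rfl, ?_⟩
  rintro rfl rfl rfl
  simp only [psi12, Equiv.coe_fn_mk]
  refine ⟨⟨0, by ring⟩, ⟨0, by ring⟩, ?_, ⟨0, by ring⟩⟩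
  rintro e _ ⟨w, rfl⟩ _ _
  exact ⟨w * f4, by ring⟩

lemma inv_psi32 (x : Tuple) : PsiInv x (psi32 x) := by
  obtain ⟨c1,c2,c3,c4,c5,c6,f1,f2,f3,f4,t1,t2⟩ := x
  refine ⟨rfl, rfl, rfl, rfl, rfl, rfl, ?_⟩
  rintro rfl rfl rfl
  simp only [psi32, Equiv.coe_fn_mk]
  refine ⟨⟨0, by ring⟩, ⟨0, by ring⟩, ?_, ⟨0, by ring⟩⟩
  rintro e _ _ _ ⟨w, rfl⟩
  exact ⟨c3 * w, by ring⟩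

lemma inv_psi43 (x : Tuple) : PsiInv x (psi43 x) := by
  obtain ⟨c1,c2,c3,c4,c5,c6,f1,f2,f3,f4,t1,t2⟩ := x
  refine ⟨rfl, rfl, rfl, rfl, rfl, rfl, ?_⟩
  rintro rfl rfl rfl
  simp only [psi43, Equiv.coe_fn_mk]
  exact ⟨⟨0, by ring⟩, ⟨1, by ring⟩, fun e _ _ _ _ => ⟨0, by ring⟩, ⟨0, by ring⟩⟩

lemma inv_psi23 (x : Tuple) : PsiInv x (psi23 x) := by
  obtain ⟨c1,c2,c3,c4,c5,c6,f1,f2,f3,f4,t1,t2⟩ := x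
  refine ⟨rfl, rfl, rfl, rfl, rfl, rfl, ?_⟩
  rintro rfl rfl rfl
  simp only [psi23, Equiv.coe_fn_mk]
  exact ⟨⟨0, by ring⟩, ⟨0, by ring⟩, fun e _ _ _ _ => ⟨0, by ring⟩, ⟨-(c4 * f1), by ring⟩⟩

lemma inv_psi34 (x : Tuple) : PsiInv x (psi34 x) := by
  obtain ⟨c1,c2,c3,c4,c5,c6,f1,f2,f3,f4,t1,t2⟩ := x
  refine ⟨rfl, rfl, rfl, rfl, rfl, rfl, ?_⟩
  rintro rfl rfl rfl
  simp only [psi34, Equiv.coe_fn_mk]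
  exact ⟨⟨1, by ring⟩, ⟨0, by ring⟩, fun e _ _ _ _ => ⟨0, by ring⟩, ⟨0, by ring⟩⟩

lemma inv_psi14 (x : Tuple) : PsiInv x (psi14 x) := by
  obtain ⟨c1,c2,c3,c4,c5,c6,f1,f2,f3,f4,t1,t2⟩ := x
  refine ⟨rfl, rfl, rfl, rfl, rfl, rfl, ?_⟩
  rintro rfl rfl rfl
  simp only [psi14, Equiv.coe_fn_mk]
  exact ⟨⟨0, by ring⟩, ⟨0, by ring⟩, fun e _ _ _ _ => ⟨0, by ring⟩, ⟨-(c1 * f2), by ring⟩⟩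

lemma psiEquiv_inv {x y : Tuple} (h : PsiEquiv x y) : PsiInv x y := by
  induction h with
  | rel a b hab =>
      obtain ⟨g, hg, rfl⟩ := hab
      simp only [psiMoves, List.mem_cons, List.not_mem_nil, or_false] at hg
      rcases hg with rfl | rfl | rfl | rfl | rfl | rfl | rfl | rfl
      · exact inv_psi21 a
      · exact inv_psi41 a
      · exact inv_psi12 a
      · exact inv_psi32 a
      · exact inv_psi43 a
      · exact inv_psi23 a
      · exact inv_psi34 a
      · exact inv_psi14 a
  | refl a => exact inv_refl a
  | symm a b _ ih => exact inv_symm ih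
  | trans a b c _ _ ih1 ih2 => exact inv_trans ih1 ih2

lemma gcd4_rep (a b c d s : ℤ)
    (h : (Int.gcd a (Int.gcd b (Int.gcd c d)) : ℤ) ∣ s) :
    ∃ X Y Z W : ℤ, s = X*a + Y*b + Z*c + W*d := by
  obtain ⟨k, hk⟩ := h
  refine ⟨Int.gcdA a (Int.gcd b (Int.gcd c d)) * k,
      Int.gcdB a (Int.gcd b (Int.gcd c d)) * Int.gcdA b (Int.gcd c d) * k,
      Int.gcdB a (Int.gcd b (Int.gcd c d)) * Int.gcdB b (Int.gcd c d) * Int.gcdA c d * k,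
      Int.gcdB a (Int.gcd b (Int.gcd c d)) * Int.gcdB b (Int.gcd c d) * Int.gcdB c d * k, ?_⟩
  have e1 := Int.gcd_eq_gcd_ab c d
  have e2 := Int.gcd_eq_gcd_ab b (Int.gcd c d)
  have e3 := Int.gcd_eq_gcd_ab a (Int.gcd b (Int.gcd c d))
  rw [hk, e3, e2, e1]; ring

/-- Classification when c₂ = c₅ = c₆ = 0, c₁, c₃, c₄ ≠ 0, gcd(c₁,c₃) = gcd(c₃,c₄) = 1:
two such tuples are ψ-equivalent iff f₁ ≡ f₁′ (mod c₁), f₂ ≡ f₂′ (mod c₄),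
c₃t₂+f₃f₄ ≡ c₃t₂′+f₃′f₄′ (mod gcd(c₁,c₄,c₃f₁,c₃f₂)) and
c₁c₄t₁+c₄f₁f₄+c₁f₂f₃ ≡ c₁c₄t₁′+c₄f₁′f₄′+c₁f₂′f₃′ (mod c₃). -/
theorem classification_case3 (c1 c3 c4 f1 f2 f3 f4 t1 t2 f1' f2' f3' f4' t1' t2' : ℤ)
    (hc1 : c1 ≠ 0) (hc3 : c3 ≠ 0) (hc4 : c4 ≠ 0)
    (h13 : Int.gcd c1 c3 = 1) (h34 : Int.gcd c3 c4 = 1) :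
    PsiEquiv ⟨c1, 0, c3, c4, 0, 0, f1, f2, f3, f4, t1, t2⟩
        ⟨c1, 0, c3, c4, 0, 0, f1', f2', f3', f4', t1', t2'⟩ ↔
      (c1 ∣ f1 - f1' ∧
        c4 ∣ f2 - f2' ∧
        (Int.gcd c1 (Int.gcd c4 (Int.gcd (c3 * f1) (c3 * f2))) : ℤ) ∣
          (c3 * t2 + f3 * f4) - (c3 * t2' + f3' * f4') ∧
        c3 ∣ (c1 * c4 * t1 + c4 * f1 * f4 + c1 * f2 * f3) -
          (c1 * c4 * t1' + c4 * f1' * f4' + c1 * f2' * f3')) := by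
  have co13 : IsCoprime c1 c3 := Int.isCoprime_iff_gcd_eq_one.mpr h13
  have co34 : IsCoprime c3 c4 := Int.isCoprime_iff_gcd_eq_one.mpr h34
  constructor
  · intro h
    have hinv := psiEquiv_inv h
    obtain ⟨_, _, _, _, _, _, himp⟩ := hinv
    obtain ⟨k1, k2, k3, k4⟩ := himp rfl rfl rfl
    refine ⟨k1, k2, ?_, k4⟩
    set e : ℤ := (Int.gcd c1 (Int.gcd c4 (Int.gcd (c3 * f1) (c3 * f2))) : ℤ) with he
    have he1 : e ∣ c1 := (Int.gcd_dvd_left _ _)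
    have he4 : e ∣ c4 := dvd_trans (Int.gcd_dvd_right _ _) (Int.gcd_dvd_left _ _)
    have hecf1 : e ∣ c3 * f1 :=
      dvd_trans (Int.gcd_dvd_right _ _) (dvd_trans (Int.gcd_dvd_right _ _) (Int.gcd_dvd_left _ _))
    have hecf2 : e ∣ c3 * f2 :=
      dvd_trans (Int.gcd_dvd_right _ _) (dvd_trans (Int.gcd_dvd_right _ _) (Int.gcd_dvd_right _ _))
    have hec3 : IsCoprime e c3 := IsCoprime.of_isCoprime_of_dvd_left co13 he1
    have hef1 : e ∣ f1 := hec3.dvd_of_dvd_mul_left hecf1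
    have hef2 : e ∣ f2 := hec3.dvd_of_dvd_mul_left hecf2
    exact k3 e he1 he4 hef1 hef2
  · rintro ⟨⟨a, ha⟩, ⟨b, hb⟩, h3, h4⟩
    have hf1 : f1' = f1 - c1 * a := by linarith
    have hf2 : f2' = f2 - c4 * b := by linarith
    subst hf1; subst hf2
    -- Bezout decompositions
    have one34 : (1 : ℤ) = c3 * Int.gcdA c3 c4 + c4 * Int.gcdB c3 c4 := by
      have := Int.gcd_eq_gcd_ab c3 c4
      rw [h34] at this; exact_mod_cast this
    have one13 : (1 : ℤ) = c1 * Int.gcdA c1 c3 + c3 * Int.gcdB c1 c3 := by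
      have := Int.gcd_eq_gcd_ab c1 c3
      rw [h13] at this; exact_mod_cast this
    obtain ⟨u, v, huv⟩ : ∃ u v : ℤ, f3' = f3 + u * c3 + v * c4 :=
      ⟨Int.gcdA c3 c4 * (f3' - f3), Int.gcdB c3 c4 * (f3' - f3), by
        linear_combination (f3' - f3) * one34⟩
    subst huv
    obtain ⟨p, q, hpq⟩ : ∃ p q : ℤ, f4' = f4 + p * c3 + q * c1 :=
      ⟨Int.gcdB c1 c3 * (f4' - f4), Int.gcdA c1 c3 * (f4' - f4), by
        linear_combination (f4' - f4) * one13⟩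
    subst hpq
    -- the intermediate t-values after matching the f-coordinates
    set T1e : ℤ := t1 + a * f4 + b * f3 - v * (f2 - c4 * b) - q * (f1 - c1 * a) with hT1e
    set T2e : ℤ := t2 - u * f4 - p * (f3 + u * c3 + v * c4) with hT2e
    -- claim 1 : c3 ∣ t1' - T1e
    obtain ⟨w4, hw4⟩ := h4
    have hco143 : IsCoprime c3 (c1 * c4) := (co13.symm).mul_right co34
    have claim1 : c3 ∣ t1' - T1e := by
      refine hco143.dvd_of_dvd_mul_left ?_
      refine ⟨-(p * c4 * (f1 - c1 * a) + u * c1 * (f2 - c4 * b)) - w4, ?_⟩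
      rw [hT1e]; linear_combination -hw4
    obtain ⟨m, hm⟩ := claim1
    -- claim 2 : gcd(c1,c4,f1-c1a,f2-c4b) ∣ T2e - t2'
    set dp : ℤ := (Int.gcd c1 (Int.gcd c4 (Int.gcd (f1 - c1 * a) (f2 - c4 * b))) : ℤ) with hdp
    have hd1 : dp ∣ c1 := (Int.gcd_dvd_left _ _)
    have hd4 : dp ∣ c4 := dvd_trans (Int.gcd_dvd_right _ _) (Int.gcd_dvd_left _ _)
    have hdf1 : dp ∣ f1 - c1 * a :=
      dvd_trans (Int.gcd_dvd_right _ _) (dvd_trans (Int.gcd_dvd_right _ _) (Int.gcd_dvd_left _ _))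
    have hdf2 : dp ∣ f2 - c4 * b :=
      dvd_trans (Int.gcd_dvd_right _ _) (dvd_trans (Int.gcd_dvd_right _ _) (Int.gcd_dvd_right _ _))
    have hdF1 : dp ∣ f1 := by simpa using dvd_add hdf1 (hd1.mul_right a)
    have hdF2 : dp ∣ f2 := by simpa using dvd_add hdf2 (hd4.mul_right b)
    have hdG : dp ∣ (Int.gcd c1 (Int.gcd c4 (Int.gcd (c3 * f1) (c3 * f2))) : ℤ) :=
      Int.dvd_coe_gcd hd1 (Int.dvd_coe_gcd hd4 (Int.dvd_coe_gcd (hdF1.mul_left c3) (hdF2.mul_left c3)))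
    obtain ⟨k3, hk3⟩ := dvd_trans hdG h3
    have hdpc3 : IsCoprime dp c3 := IsCoprime.of_isCoprime_of_dvd_left co13 hd1
    have claim2 : dp ∣ T2e - t2' := by
      refine hdpc3.dvd_of_dvd_mul_right ?_
      have hkey : (T2e - t2') * c3 =
          dp * k3 + c4 * (v * f4) + c1 * (q * (f3 + u * c3 + v * c4)) := by
        rw [hT2e]; linear_combination hk3
      rw [hkey]
      exact dvd_add (dvd_add (Dvd.intro _ rfl) (hd4.mul_right _)) (hd1.mul_right _)
    obtain ⟨X, Y, Z, W, hXYZW⟩ := gcd4_rep c1 c4 (f1 - c1 * a) (f2 - c4 * b) (T2e - t2') claim2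
    -- build the chain of moves
    refine PsiEquiv.trans' (stepG c1 c3 c4 f1 f2 f3 f4 t1 t2 a) ?_
    refine PsiEquiv.trans' (stepE c1 c3 c4 _ _ _ _ _ _ b) ?_
    refine PsiEquiv.trans' (stepH c1 c3 c4 _ _ _ _ _ _ u) ?_
    refine PsiEquiv.trans' (stepC c1 c3 c4 _ _ _ _ _ _ (-v)) ?_
    refine PsiEquiv.trans' (stepF c1 c3 c4 _ _ _ _ _ _ p) ?_
    refine PsiEquiv.trans' (stepA c1 c3 c4 _ _ _ _ _ _ (-q)) ?_
    refine PsiEquiv.trans' (shiftT1 c1 c3 c4 _ _ _ _ _ _ m) ?_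
    refine PsiEquiv.trans' (shiftT2c1 c1 c3 c4 _ _ _ _ _ _ (-X)) ?_
    refine PsiEquiv.trans' (shiftT2c4 c1 c3 c4 _ _ _ _ _ _ (-Y)) ?_
    refine PsiEquiv.trans' (stepB c1 c3 c4 _ _ _ _ _ _ Z) ?_
    refine PsiEquiv.trans' (stepD c1 c3 c4 _ _ _ _ _ _ W) ?_
    refine PsiEquiv.of_eq (tupext (by ring) (by ring) (by ring) (by ring) ?_ ?_)
    · rw [hT1e] at hm; linear_combination -hm
    · rw [hT2e] at hXYZW; linear_combination hXYZW
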